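/- Fix an integer d ≥ 2. For each k ≥ 1 define α_k(d,N) = Σ over strictly increasing tuples 1 ≤ j₁ < j₂ < ... < j_k ≤ N of d^{j₁-1} (with α_k(d,N) = 0 for N < k). Then for each k there exists a polynomial P_k in two variables with rational coefficients such that α_k(d,N) = d^N/(d-1)^k + P_k(1/(d-1), N) for all d ≥ 2 and N ≥ 0. -/

import Mathlib

/-- `α_k(d,N) = Σ_{1 ≤ j₁ < j₂ < ... < j_k ≤ N} d^{j₁-1}`: the sum over `k`-element
subsets `{j₁ < ... < j_k}` of `{1,…,N}` of `d` raised to the predecessor of the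
minimum element (it is `0` when `N < k`). -/
def alphaQ (k d N : ℕ) : ℚ :=
  ∑ s ∈ Finset.powersetCard k (Finset.Icc 1 N), (d : ℚ) ^ ((WithTop.untopD 0 s.min) - 1)

lemma alphaQ_zero_right (k d : ℕ) (hk : 1 ≤ k) : alphaQ k d 0 = 0 := by
  unfold alphaQ
  rw [show Finset.Icc 1 0 = (∅ : Finset ℕ) by simp,
    Finset.powersetCard_eq_empty.mpr (by simp; omega), Finset.sum_empty]

lemma Icc_one_succ (N : ℕ) : Finset.Icc 1 (N + 1) = insert (N + 1) (Finset.Icc 1 N) := by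
  ext x
  simp only [Finset.mem_Icc, Finset.mem_insert]
  omega

lemma not_mem_Icc_one (N : ℕ) : N + 1 ∉ Finset.Icc 1 N := by simp

/-- General recurrence step: splitting off the subsets containing `N+1`. -/
lemma alphaQ_succ_aux (k d N : ℕ) :
    alphaQ (k + 1) d (N + 1) = alphaQ (k + 1) d N +
      ∑ t ∈ Finset.powersetCard k (Finset.Icc 1 N),
        (d : ℚ) ^ ((WithTop.untopD 0 (insert (N + 1) t).min) - 1) := by
  have hinj : ∀ x ∈ Finset.powersetCard k (Finset.Icc 1 N),
      ∀ y ∈ Finset.powersetCard k (Finset.Icc 1 N),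
      insert (N + 1) x = insert (N + 1) y → x = y := by
    intro x hx y hy h
    have hx' : N + 1 ∉ x := fun h' => by
      simpa using ((Finset.mem_powersetCard.mp hx).1 h')
    have hy' : N + 1 ∉ y := fun h' => by
      simpa using ((Finset.mem_powersetCard.mp hy).1 h')
    rw [← Finset.erase_insert hx', ← Finset.erase_insert hy', h]
  have hdisj : Disjoint (Finset.powersetCard (k + 1) (Finset.Icc 1 N))
      ((Finset.powersetCard k (Finset.Icc 1 N)).image (insert (N + 1))) := by
    rw [Finset.disjoint_left]
    intro t ht ht'
    simp only [Finset.mem_image] at ht'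
    obtain ⟨u, hu, rfl⟩ := ht'
    have : N + 1 ∈ Finset.Icc 1 N :=
      (Finset.mem_powersetCard.mp ht).1 (Finset.mem_insert_self _ _)
    simp at this
  unfold alphaQ
  rw [Icc_one_succ, Finset.powersetCard_succ_insert (not_mem_Icc_one N),
    Finset.sum_union hdisj, Finset.sum_image hinj]

lemma alphaQ_succ (k d N : ℕ) (hk : 1 ≤ k) :
    alphaQ (k + 1) d (N + 1) = alphaQ (k + 1) d N + alphaQ k d N := by
  rw [alphaQ_succ_aux]
  congr 1
  unfold alphaQ
  apply Finset.sum_congr rfl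
  intro t ht
  have htcard : t.card = k := (Finset.mem_powersetCard.mp ht).2
  have htsub : t ⊆ Finset.Icc 1 N := (Finset.mem_powersetCard.mp ht).1
  have htne : t.Nonempty := Finset.card_pos.mp (by omega)
  have hmin : (↑(t.min' htne) : WithTop ℕ) = t.min := Finset.coe_min' htne
  have hle : t.min' htne ≤ N + 1 := by
    have := htsub (Finset.min'_mem t htne)
    simp only [Finset.mem_Icc] at this
    omega
  have h2 : t.min ≤ ((N + 1 : ℕ) : WithTop ℕ) := by
    rw [← hmin]; exact_mod_cast hle
  have h3 : (insert (N + 1) t).min = t.min := by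
    rw [Finset.min_insert]
    exact min_eq_right h2
  rw [h3]

lemma alphaQ_succ_eq_sum (k d N : ℕ) (hk : 1 ≤ k) :
    alphaQ (k + 1) d N = ∑ M ∈ Finset.range N, alphaQ k d M := by
  induction N with
  | zero => simp [alphaQ_zero_right (k + 1) d (by omega)]
  | succ n ih => rw [alphaQ_succ k d n hk, ih, Finset.sum_range_succ]

lemma alphaQ_one_succ (d N : ℕ) : alphaQ 1 d (N + 1) = alphaQ 1 d N + (d : ℚ) ^ N := by
  rw [alphaQ_succ_aux 0 d N]
  congr 1
  rw [Finset.powersetCard_zero, Finset.sum_singleton,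
    show insert (N + 1) (∅ : Finset ℕ) = {N + 1} from rfl, Finset.min_singleton,
    WithTop.untopD_coe]
  simp

lemma alphaQ_one (d N : ℕ) : alphaQ 1 d N = ∑ i ∈ Finset.range N, (d : ℚ) ^ i := by
  induction N with
  | zero => simp [alphaQ_zero_right 1 d le_rfl]
  | succ n ih => rw [alphaQ_one_succ, ih, Finset.sum_range_succ]

/-- Summing the evaluations of a two-variable polynomial over `M < N` (in the second
variable) is again given by a two-variable polynomial (Faulhaber). -/
lemma sum_eval_poly (P : MvPolynomial (Fin 2) ℚ) :
    ∃ R : MvPolynomial (Fin 2) ℚ, ∀ (x : ℚ) (N : ℕ),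
      ∑ M ∈ Finset.range N, MvPolynomial.eval ![x, (M : ℚ)] P
        = MvPolynomial.eval ![x, (N : ℚ)] R := by
  induction P using MvPolynomial.induction_on' with
  | monomial u a =>
    refine ⟨MvPolynomial.C a * MvPolynomial.X 0 ^ (u 0) *
      ∑ i ∈ Finset.range (u 1 + 1),
        MvPolynomial.C (bernoulli i * ((u 1 + 1).choose i) / (u 1 + 1)) *
          MvPolynomial.X 1 ^ (u 1 + 1 - i), ?_⟩
    intro x N
    have hev : ∀ M : ℚ, MvPolynomial.eval ![x, M] (MvPolynomial.monomial u a)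
        = a * x ^ u 0 * M ^ u 1 := by
      intro M
      rw [MvPolynomial.eval_monomial, Finsupp.prod_pow, Fin.prod_univ_two]
      simp [mul_assoc]
    calc ∑ M ∈ Finset.range N, MvPolynomial.eval ![x, (M : ℚ)] (MvPolynomial.monomial u a)
        = a * x ^ u 0 * ∑ M ∈ Finset.range N, (M : ℚ) ^ u 1 := by
          rw [Finset.mul_sum]
          exact Finset.sum_congr rfl fun M _ => hev M
      _ = a * x ^ u 0 * ∑ i ∈ Finset.range (u 1 + 1),
            bernoulli i * ((u 1 + 1).choose i) * (N : ℚ) ^ (u 1 + 1 - i) / (u 1 + 1) := by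
          rw [sum_range_pow]
      _ = _ := by
          simp only [map_sum, map_mul, map_pow, MvPolynomial.eval_C, MvPolynomial.eval_X,
            Matrix.cons_val_zero, Matrix.cons_val_one, Matrix.head_cons]
          rw [Finset.mul_sum, Finset.mul_sum]
          exact Finset.sum_congr rfl fun i _ => by ring
  | add p q hp hq =>
    obtain ⟨Rp, hRp⟩ := hp
    obtain ⟨Rq, hRq⟩ := hq
    exact ⟨Rp + Rq, fun x N => by
      simp [map_add, Finset.sum_add_distrib, hRp x N, hRq x N]⟩

/-- For every `k ≥ 1` there is a polynomial `P_k` in two variables with rational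
coefficients such that `α_k(d,N) = d^N/(d-1)^k + P_k(1/(d-1), N)` for all integers
`d ≥ 2` and `N ≥ 0`. -/
theorem alpha_eq_geometric_add_poly (k : ℕ) (hk : 1 ≤ k) :
    ∃ P : MvPolynomial (Fin 2) ℚ, ∀ d N : ℕ, 2 ≤ d →
      alphaQ k d N = (d : ℚ) ^ N / ((d : ℚ) - 1) ^ k
        + MvPolynomial.eval ![1 / ((d : ℚ) - 1), (N : ℚ)] P := by
  induction k, hk using Nat.le_induction with
  | base =>
    refine ⟨-MvPolynomial.X 0, fun d N hd => ?_⟩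
    have hd1 : (d : ℚ) - 1 ≠ 0 := by
      have : (2 : ℚ) ≤ (d : ℚ) := by exact_mod_cast hd
      intro h; nlinarith
    have hdne : (d : ℚ) ≠ 1 := by intro h; apply hd1; rw [h]; ring
    rw [alphaQ_one, geom_sum_eq hdne]
    simp only [map_neg, MvPolynomial.eval_X, Matrix.cons_val_zero, pow_one]
    field_simp
    ring
  | succ k hk ih =>
    obtain ⟨P, hP⟩ := ih
    obtain ⟨R, hR⟩ := sum_eval_poly P
    refine ⟨R - MvPolynomial.X 0 ^ (k + 1), fun d N hd => ?_⟩
    have hd1 : (d : ℚ) - 1 ≠ 0 := by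
      have : (2 : ℚ) ≤ (d : ℚ) := by exact_mod_cast hd
      intro h; nlinarith
    have hdne : (d : ℚ) ≠ 1 := by intro h; apply hd1; rw [h]; ring
    rw [alphaQ_succ_eq_sum k d N hk]
    calc ∑ M ∈ Finset.range N, alphaQ k d M
        = ∑ M ∈ Finset.range N, ((d : ℚ) ^ M / ((d : ℚ) - 1) ^ k
            + MvPolynomial.eval ![1 / ((d : ℚ) - 1), (M : ℚ)] P) :=
          Finset.sum_congr rfl fun M _ => hP d M hd
      _ = (∑ M ∈ Finset.range N, (d : ℚ) ^ M) / ((d : ℚ) - 1) ^ k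
            + MvPolynomial.eval ![1 / ((d : ℚ) - 1), (N : ℚ)] R := by
          rw [Finset.sum_add_distrib, Finset.sum_div, hR]
      _ = _ := by
          rw [geom_sum_eq hdne]
          simp only [map_sub, map_pow, MvPolynomial.eval_X, Matrix.cons_val_zero]
          rw [div_pow, one_pow]
          field_simp
          ring
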